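/- For every c : ℕ → ℕ and every n ∈ ℕ, the graph L^c_n is a finite path; for n > 0 its two endpoints (vertices of degree 1) are e_i^n = (p_0)^⌢(0)^{n−1}⌢(i) for i < 2; and every vertex of L^c_n is of the form (p_k)^⌢t for some k ∈ ℕ and some binary string t of length at most n. -/

import Mathlib

open MeasureTheory

/-- The endpoint `e_i^n = (p_0)^⌢(0)^{n-1}⌢(i)` of the finite path `L^c_n`
(vertices of `L^c_n` are coded as lists of naturals, the head being the
index `k` of `p_k` and the tail being a binary string). -/
def pathEnd : ℕ → ℕ → List ℕ
  | 0, _ => [0]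
  | m + 1, i => 0 :: (List.replicate m 0 ++ [i])

/-- The vertex set of the finite path `L^c_n`. -/
def LVerts (c : ℕ → ℕ) : ℕ → Set (List ℕ)
  | 0 => {[0]}
  | n + 1 =>
      ((fun v => v ++ [0]) '' LVerts c n) ∪ ((fun v => v ++ [1]) '' LVerts c n) ∪
        {v | ∃ k ≤ c n, v = [k]}

/-- The edge set of the finite path `L^c_n` (as a set of ordered pairs,
one orientation for each edge): `L^c_{n+1}` consists of two relabelled copies
of `L^c_n` joined by the path `(e_1^n)^⌢(0), p_0, …, p_{c(n)}, (e_1^n)^⌢(1)`. -/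
def LEdges (c : ℕ → ℕ) : ℕ → Set (List ℕ × List ℕ)
  | 0 => ∅
  | n + 1 =>
      {e | ∃ u v, (u, v) ∈ LEdges c n ∧ ∃ i ≤ 1, e = (u ++ [i], v ++ [i])} ∪
      {(pathEnd n 1 ++ [0], [0]), ([c n], pathEnd n 1 ++ [1])} ∪
      {e | ∃ j, j < c n ∧ e = ([j], [j + 1])}

/-- The (symmetric) adjacency relation of `L^c_n`. -/
def LAdj (c : ℕ → ℕ) (n : ℕ) (u v : List ℕ) : Prop :=
  (u, v) ∈ LEdges c n ∨ (v, u) ∈ LEdges c n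

/-! ### Auxiliary lemmas about infixes of length two -/

theorem pair_infix_iff {α} {l : List α} {u v : α} :
    [u, v] <:+: l ↔ ∃ j, l[j]? = some u ∧ l[j + 1]? = some v := by
  constructor
  · rintro ⟨s, t, rfl⟩
    refine ⟨s.length, ?_, ?_⟩
    · rw [List.append_assoc, List.getElem?_append_right le_rfl]
      simp
    · rw [List.append_assoc, List.getElem?_append_right (by omega)]
      simp
  · rintro ⟨j, hu, hv⟩
    induction l generalizing j with
    | nil => simp at hu
    | cons x l ih =>
      cases j with
      | zero =>
        simp only [List.getElem?_cons_zero, Option.some.injEq] at hu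
        cases l with
        | nil => simp at hv
        | cons y l =>
          simp only [List.getElem?_cons_succ, List.getElem?_cons_zero,
            Option.some.injEq] at hv
          exact ⟨[], l, by simp [hu, hv]⟩
      | succ j =>
        exact List.infix_cons (ih j (by simpa using hu) (by simpa using hv))

theorem pair_infix_map {α β} {f : α → β} {l : List α} {u v : β} :
    [u, v] <:+: l.map f ↔ ∃ u' v', [u', v'] <:+: l ∧ u = f u' ∧ v = f v' := by
  constructor
  · rintro ⟨s, t, h⟩
    have h' : List.map f l = s ++ ([u, v] ++ t) := by rw [← h, List.append_assoc]
    obtain ⟨s', r, rfl, hs, hr⟩ := List.map_eq_append_iff.mp h'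
    rcases r with _ | ⟨u', _ | ⟨v', t'⟩⟩
    · simp at hr
    · simp at hr
    · simp only [List.map_cons, List.cons_append, List.nil_append,
        List.cons.injEq] at hr
      exact ⟨u', v', ⟨s', t', by simp⟩, hr.1.symm, hr.2.1.symm⟩
  · rintro ⟨u', v', ⟨s, t, rfl⟩, rfl, rfl⟩
    exact ⟨s.map f, t.map f, by simp⟩

theorem pair_infix_reverse {α} {l : List α} {u v : α} :
    [u, v] <:+: l.reverse ↔ [v, u] <:+: l := by
  rw [show ([u, v] : List α) = [v, u].reverse from rfl, List.reverse_infix]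

theorem pair_infix_append {α} {a b : List α} {u v : α} :
    [u, v] <:+: a ++ b ↔ [u, v] <:+: a ∨ [u, v] <:+: b ∨
      (a.getLast? = some u ∧ b.head? = some v) := by
  constructor
  · rintro ⟨s, t, h⟩
    have h' : a ++ b = s ++ ([u, v] ++ t) := by rw [← h, List.append_assoc]
    rcases List.append_eq_append_iff.mp h' with ⟨a', rfl, rfl⟩ | ⟨c', rfl, h2⟩
    · exact Or.inr (Or.inl ⟨a', t, by simp⟩)
    · rcases c' with _ | ⟨x, _ | ⟨y, t''⟩⟩
      · exact Or.inr (Or.inl ⟨[], t, by simpa using h2⟩)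
      · simp only [List.cons_append, List.nil_append, List.cons.injEq] at h2
        refine Or.inr (Or.inr ⟨?_, ?_⟩)
        · rw [h2.1]; simp
        · rw [← h2.2]; simp
      · simp only [List.cons_append, List.cons.injEq] at h2
        exact Or.inl ⟨s, t'', by simp [h2.1, h2.2.1, ← h2.2.2]⟩
  · rintro (h | h | ⟨hu, hv⟩)
    · exact h.trans (List.prefix_append a b).isInfix
    · exact h.trans (List.suffix_append a b).isInfix
    · obtain ⟨a', rfl⟩ := List.getLast?_eq_some_iff.mp hu
      obtain ⟨b', rfl⟩ := List.head?_eq_some_iff.mp hv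
      exact ⟨a', b', by simp⟩

theorem pair_infix_range {k a b : ℕ} :
    [a, b] <:+: List.range k ↔ b = a + 1 ∧ a + 1 < k := by
  rw [pair_infix_iff]
  constructor
  · rintro ⟨j, hu, hv⟩
    have h2 : j + 1 < k := by
      have := List.getElem?_eq_some_iff.mp hv
      simpa using this.1
    rw [List.getElem?_range (by omega)] at hu
    rw [List.getElem?_range h2] at hv
    simp only [Option.some.injEq] at hu hv
    omega
  · rintro ⟨rfl, h⟩
    exact ⟨a, List.getElem?_range (by omega), List.getElem?_range h⟩

theorem pair_infix_getD {l : List (List ℕ)} {u v : List ℕ} :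
    [u, v] <:+: l ↔
      ∃ j, j + 1 < l.length ∧ l.getD j [] = u ∧ l.getD (j + 1) [] = v := by
  rw [pair_infix_iff]
  constructor
  · rintro ⟨j, hu, hv⟩
    obtain ⟨h2, hv⟩ := List.getElem?_eq_some_iff.mp hv
    obtain ⟨h1, hu⟩ := List.getElem?_eq_some_iff.mp hu
    exact ⟨j, h2, by rw [List.getD_eq_getElem _ _ h1, hu],
      by rw [List.getD_eq_getElem _ _ h2, hv]⟩
  · rintro ⟨j, h, hu, hv⟩
    refine ⟨j, ?_, ?_⟩
    · rw [List.getElem?_eq_some_iff]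
      exact ⟨by omega, by rw [← List.getD_eq_getElem l [] (by omega)]; exact hu⟩
    · rw [List.getElem?_eq_some_iff]
      exact ⟨h, by rw [← List.getD_eq_getElem l [] h]; exact hv⟩

/-! ### The explicit enumeration of `L^c_n` as a path -/

/-- The list of vertices of `L^c_n` in path order. -/
def Wl (c : ℕ → ℕ) : ℕ → List (List ℕ)
  | 0 => [[0]]
  | n + 1 =>
      (Wl c n).map (fun x => x ++ [0]) ++
        (((List.range (c n + 1)).map fun j => [j]) ++
          ((Wl c n).map (fun x => x ++ [1])).reverse)

theorem pathEnd_succ (n i : ℕ) : pathEnd (n + 1) i = pathEnd n 0 ++ [i] := by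
  cases n with
  | zero => rfl
  | succ m => simp [pathEnd, List.replicate_succ']

theorem LAdj_iff (c : ℕ → ℕ) (n : ℕ) (u v : List ℕ) :
    LAdj c n u v ↔ (u, v) ∈ LEdges c n ∨ (v, u) ∈ LEdges c n := Iff.rfl

theorem W_spec (c : ℕ → ℕ) (n : ℕ) :
    Wl c n ≠ [] ∧
    (Wl c n).head? = some (pathEnd n 0) ∧
    (Wl c n).getLast? = some (pathEnd n 1) ∧
    (Wl c n).Nodup ∧
    LVerts c n = {v | v ∈ Wl c n} ∧
    (∀ u v, LAdj c n u v ↔ ([u, v] <:+: Wl c n ∨ [v, u] <:+: Wl c n)) ∧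
    (∀ v ∈ Wl c n, ∃ (k : ℕ) (t : List ℕ),
      t.length ≤ n ∧ (∀ a ∈ t, a ≤ 1) ∧ v = k :: t) := by
  induction n with
  | zero =>
    refine ⟨by simp [Wl], rfl, rfl, by simp [Wl], ?_, ?_, ?_⟩
    · ext x; simp [LVerts, Wl]
    · intro u v
      constructor
      · rintro (h | h) <;> simp [LEdges] at h
      · rintro (h | h) <;> exact absurd h.length_le (by simp [Wl])
    · intro v hv
      simp [Wl] at hv
      exact ⟨0, [], by simp, by simp, by simp [hv]⟩
  | succ n ih =>
    obtain ⟨hne, hh, hl, hnd, hv, had, hsh⟩ := ih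
    have hW : Wl c (n + 1) =
        (Wl c n).map (fun x => x ++ [0]) ++
          (((List.range (c n + 1)).map fun j => [j]) ++
            ((Wl c n).map (fun x => x ++ [1])).reverse) := rfl
    have hA_last : ((Wl c n).map (fun x => x ++ [0])).getLast? =
        some (pathEnd n 1 ++ [0]) := by
      rw [List.getLast?_map, hl]; rfl
    have hB_head : (((List.range (c n + 1)).map fun j => [j]) :
        List (List ℕ)).head? = some [0] := by
      rw [List.range_succ_eq_map]; rfl
    have hB_last : (((List.range (c n + 1)).map fun j => [j]) :
        List (List ℕ)).getLast? = some [c n] := by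
      rw [List.getLast?_map, List.range_succ]
      simp
    have hC_head : (((Wl c n).map (fun x => x ++ [1])).reverse).head? =
        some (pathEnd n 1 ++ [1]) := by
      rw [List.head?_reverse, List.getLast?_map, hl]; rfl
    have hC_last : (((Wl c n).map (fun x => x ++ [1])).reverse).getLast? =
        some (pathEnd n 0 ++ [1]) := by
      rw [List.getLast?_reverse, List.head?_map, hh]; rfl
    have hBC_head : ((((List.range (c n + 1)).map fun j => [j]) ++
        ((Wl c n).map (fun x => x ++ [1])).reverse)).head? = some [0] := by
      rw [List.head?_append, hB_head]; rfl
    -- the splitting of infix pairs of the new list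
    have hsplit : ∀ u v : List ℕ, [u, v] <:+: Wl c (n + 1) ↔
        ([u, v] <:+: (Wl c n).map (fun x => x ++ [0]) ∨
         [u, v] <:+: ((List.range (c n + 1)).map fun j => [j]) ∨
         [u, v] <:+: ((Wl c n).map (fun x => x ++ [1])).reverse ∨
         (pathEnd n 1 ++ [0] = u ∧ [0] = v) ∨
         ([c n] = u ∧ pathEnd n 1 ++ [1] = v)) := by
      intro u v
      rw [hW, pair_infix_append, pair_infix_append, hA_last, hBC_head, hB_last,
        hC_head]
      simp only [Option.some.injEq]
      tauto
    have hmap : ∀ (i : ℕ) (u v : List ℕ),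
        ([u, v] <:+: (Wl c n).map (fun x => x ++ [i]) ∨
          [v, u] <:+: (Wl c n).map (fun x => x ++ [i])) ↔
          ∃ a b, LAdj c n a b ∧ u = a ++ [i] ∧ v = b ++ [i] := by
      intro i u v
      constructor
      · rintro (h | h) <;> rw [pair_infix_map] at h
        · obtain ⟨a, b, hw, rfl, rfl⟩ := h
          exact ⟨a, b, (had a b).mpr (Or.inl hw), rfl, rfl⟩
        · obtain ⟨a, b, hw, rfl, rfl⟩ := h
          exact ⟨b, a, (had b a).mpr (Or.inr hw), rfl, rfl⟩
      · rintro ⟨a, b, hab, rfl, rfl⟩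
        rcases (had a b).mp hab with h | h
        · exact Or.inl (pair_infix_map.mpr ⟨a, b, h, rfl, rfl⟩)
        · exact Or.inr (pair_infix_map.mpr ⟨b, a, h, rfl, rfl⟩)
    have hB1 : ∀ u v : List ℕ,
        [u, v] <:+: ((List.range (c n + 1)).map fun j => [j]) ↔
          ∃ j, j < c n ∧ u = [j] ∧ v = [j + 1] := by
      intro u v
      rw [pair_infix_map]
      constructor
      · rintro ⟨a, b, hr, rfl, rfl⟩
        obtain ⟨rfl, hlt⟩ := pair_infix_range.mp hr
        exact ⟨a, by omega, rfl, rfl⟩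
      · rintro ⟨j, hj, rfl, rfl⟩
        exact ⟨j, j + 1, pair_infix_range.mpr ⟨rfl, by omega⟩, rfl, rfl⟩
    refine ⟨?_, ?_, ?_, ?_, ?_, ?_, ?_⟩
    · rw [hW]; simp [hne]
    · rw [hW, List.head?_append, List.head?_map, hh, pathEnd_succ]; rfl
    · rw [hW, List.getLast?_append, List.getLast?_append, hC_last, pathEnd_succ]
      rfl
    · rw [hW]
      have hinj0 : Function.Injective (fun x : List ℕ => x ++ [0]) :=
        List.append_left_injective [0]
      have hinj1 : Function.Injective (fun x : List ℕ => x ++ [1]) :=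
        List.append_left_injective [1]
      refine (hnd.map hinj0).append
        ((List.nodup_range.map (fun a b h => by simpa using h)).append
          (List.nodup_reverse.mpr (hnd.map hinj1)) ?_) ?_
      · intro x hxB hxC
        simp only [List.mem_map, List.mem_range] at hxB
        simp only [List.mem_reverse, List.mem_map] at hxC
        obtain ⟨j, _, rfl⟩ := hxB
        obtain ⟨w, hw, hww⟩ := hxC
        obtain ⟨k, t, _, _, rfl⟩ := hsh w hw
        simp at hww
      · intro x hxA hxBC
        simp only [List.mem_map] at hxA
        obtain ⟨a, ha, rfl⟩ := hxA
        rcases List.mem_append.mp hxBC with hxB | hxC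
        · simp only [List.mem_map, List.mem_range] at hxB
          obtain ⟨j, _, hj⟩ := hxB
          obtain ⟨k, t, _, _, rfl⟩ := hsh a ha
          simp at hj
        · simp only [List.mem_reverse, List.mem_map] at hxC
          obtain ⟨w, hw, hww⟩ := hxC
          have := congrArg List.getLast? hww
          simp [List.getLast?_append] at this
    · ext x
      rw [hW]
      simp only [LVerts, Set.mem_union, Set.mem_image, Set.mem_setOf_eq, hv,
        List.mem_append, List.mem_map, List.mem_reverse, List.mem_range,
        Nat.lt_succ_iff]
      constructor
      · rintro ((⟨a, ha, rfl⟩ | ⟨a, ha, rfl⟩) | ⟨k, hk, rfl⟩)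
        · exact Or.inl ⟨a, ha, rfl⟩
        · exact Or.inr (Or.inr ⟨a, ha, rfl⟩)
        · exact Or.inr (Or.inl ⟨k, hk, rfl⟩)
      · rintro (⟨a, ha, rfl⟩ | ⟨k, hk, rfl⟩ | ⟨a, ha, rfl⟩)
        · exact Or.inl (Or.inl ⟨a, ha, rfl⟩)
        · exact Or.inr ⟨k, hk, rfl⟩
        · exact Or.inl (Or.inr ⟨a, ha, rfl⟩)
    · -- adjacency
      intro u v
      have hE : LAdj c (n + 1) u v ↔
          ((∃ a b, LAdj c n a b ∧ u = a ++ [0] ∧ v = b ++ [0]) ∨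
           (∃ a b, LAdj c n a b ∧ u = a ++ [1] ∧ v = b ++ [1]) ∨
           (∃ j, j < c n ∧ ((u = [j] ∧ v = [j + 1]) ∨ (u = [j + 1] ∧ v = [j]))) ∨
           ((u = pathEnd n 1 ++ [0] ∧ v = [0]) ∨
             (v = pathEnd n 1 ++ [0] ∧ u = [0])) ∨
           ((u = [c n] ∧ v = pathEnd n 1 ++ [1]) ∨
             (v = [c n] ∧ u = pathEnd n 1 ++ [1]))) := by
        simp only [LAdj_iff, LEdges, Set.mem_union, Set.mem_setOf_eq,
          Set.mem_insert_iff, Set.mem_singleton_iff, Prod.mk.injEq]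
        constructor
        · rintro ((((⟨a, b, hab, i, hi, hu2, hv2⟩ | h | h) | ⟨j, hj, hu2, hv2⟩)) |
              (((⟨a, b, hab, i, hi, hu2, hv2⟩ | h | h) | ⟨j, hj, hu2, hv2⟩)))
          · rcases Nat.le_one_iff_eq_zero_or_eq_one.mp hi with rfl | rfl
            · exact Or.inl ⟨a, b, Or.inl hab, hu2, hv2⟩
            · exact Or.inr (Or.inl ⟨a, b, Or.inl hab, hu2, hv2⟩)
          · exact Or.inr (Or.inr (Or.inr (Or.inl (Or.inl h))))
          · exact Or.inr (Or.inr (Or.inr (Or.inr (Or.inl h))))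
          · exact Or.inr (Or.inr (Or.inl ⟨j, hj, Or.inl ⟨hu2, hv2⟩⟩))
          · rcases Nat.le_one_iff_eq_zero_or_eq_one.mp hi with rfl | rfl
            · exact Or.inl ⟨b, a, Or.inr hab, hv2, hu2⟩
            · exact Or.inr (Or.inl ⟨b, a, Or.inr hab, hv2, hu2⟩)
          · exact Or.inr (Or.inr (Or.inr (Or.inl (Or.inr h))))
          · exact Or.inr (Or.inr (Or.inr (Or.inr (Or.inr h))))
          · exact Or.inr (Or.inr (Or.inl ⟨j, hj, Or.inr ⟨hv2, hu2⟩⟩))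
        · rintro (⟨a, b, hab, rfl, rfl⟩ | ⟨a, b, hab, rfl, rfl⟩ |
              ⟨j, hj, (⟨rfl, rfl⟩ | ⟨rfl, rfl⟩)⟩ | ((h | h) | (h | h)))
          · rcases hab with h | h
            · exact Or.inl (Or.inl (Or.inl ⟨a, b, h, 0, by omega, rfl, rfl⟩))
            · exact Or.inr (Or.inl (Or.inl ⟨b, a, h, 0, by omega, rfl, rfl⟩))
          · rcases hab with h | h
            · exact Or.inl (Or.inl (Or.inl ⟨a, b, h, 1, by omega, rfl, rfl⟩))
            · exact Or.inr (Or.inl (Or.inl ⟨b, a, h, 1, by omega, rfl, rfl⟩))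
          · exact Or.inl (Or.inr ⟨j, hj, rfl, rfl⟩)
          · exact Or.inr (Or.inr ⟨j, hj, rfl, rfl⟩)
          · exact Or.inl (Or.inl (Or.inr (Or.inl h)))
          · exact Or.inr (Or.inl (Or.inr (Or.inl h)))
          · exact Or.inl (Or.inl (Or.inr (Or.inr h)))
          · exact Or.inr (Or.inl (Or.inr (Or.inr h)))
      rw [hE, hsplit u v, hsplit v u]
      constructor
      · rintro (⟨a, b, hab, rfl, rfl⟩ | ⟨a, b, hab, rfl, rfl⟩ |
            ⟨j, hj, (⟨rfl, rfl⟩ | ⟨rfl, rfl⟩)⟩ | (h | h) | (h | h))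
        · rcases (hmap 0 _ _).mpr ⟨a, b, hab, rfl, rfl⟩ with h' | h'
          · exact Or.inl (Or.inl h')
          · exact Or.inr (Or.inl h')
        · rcases (hmap 1 _ _).mpr ⟨a, b, hab, rfl, rfl⟩ with h' | h'
          · exact Or.inr (Or.inr (Or.inr (Or.inl (pair_infix_reverse.mpr h'))))
          · exact Or.inl (Or.inr (Or.inr (Or.inl (pair_infix_reverse.mpr h'))))
        · exact Or.inl (Or.inr (Or.inl ((hB1 _ _).mpr ⟨j, hj, rfl, rfl⟩)))
        · exact Or.inr (Or.inr (Or.inl ((hB1 _ _).mpr ⟨j, hj, rfl, rfl⟩)))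
        · exact Or.inl (Or.inr (Or.inr (Or.inr (Or.inl ⟨h.1.symm, h.2.symm⟩))))
        · exact Or.inr (Or.inr (Or.inr (Or.inr (Or.inl ⟨h.1.symm, h.2.symm⟩))))
        · exact Or.inl (Or.inr (Or.inr (Or.inr (Or.inr ⟨h.1.symm, h.2.symm⟩))))
        · exact Or.inr (Or.inr (Or.inr (Or.inr (Or.inr ⟨h.1.symm, h.2.symm⟩))))
      · rintro ((h | h | h | h | h) | (h | h | h | h | h))
        · exact Or.inl ((hmap 0 _ _).mp (Or.inl h))
        · obtain ⟨j, hj, hu2, hv2⟩ := (hB1 _ _).mp h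
          exact Or.inr (Or.inr (Or.inl ⟨j, hj, Or.inl ⟨hu2, hv2⟩⟩))
        · rw [pair_infix_reverse] at h
          exact Or.inr (Or.inl ((hmap 1 _ _).mp (Or.inr h)))
        · exact Or.inr (Or.inr (Or.inr (Or.inl (Or.inl ⟨h.1.symm, h.2.symm⟩))))
        · exact Or.inr (Or.inr (Or.inr (Or.inr (Or.inl ⟨h.1.symm, h.2.symm⟩))))
        · exact Or.inl ((hmap 0 _ _).mp (Or.inr h))
        · obtain ⟨j, hj, hu2, hv2⟩ := (hB1 _ _).mp h
          exact Or.inr (Or.inr (Or.inl ⟨j, hj, Or.inr ⟨hv2, hu2⟩⟩))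
        · rw [pair_infix_reverse] at h
          exact Or.inr (Or.inl ((hmap 1 _ _).mp (Or.inl h)))
        · exact Or.inr (Or.inr (Or.inr (Or.inl (Or.inr ⟨h.1.symm, h.2.symm⟩))))
        · exact Or.inr (Or.inr (Or.inr (Or.inr (Or.inr ⟨h.1.symm, h.2.symm⟩))))
    · -- shape of vertices
      intro x hx
      rw [hW] at hx
      simp only [List.mem_append, List.mem_map, List.mem_reverse,
        List.mem_range] at hx
      rcases hx with ⟨a, ha, rfl⟩ | ⟨j, hj, rfl⟩ | ⟨a, ha, rfl⟩
      · obtain ⟨k, t, h1, h2, rfl⟩ := hsh a ha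
        refine ⟨k, t ++ [0], by simp; omega, ?_, by simp⟩
        intro b hb
        rcases List.mem_append.mp hb with h | h
        · exact h2 b h
        · simp at h; omega
      · exact ⟨j, [], by simp, by simp, by simp⟩
      · obtain ⟨k, t, h1, h2, rfl⟩ := hsh a ha
        refine ⟨k, t ++ [1], by simp; omega, ?_, by simp⟩
        intro b hb
        rcases List.mem_append.mp hb with h | h
        · exact h2 b h
        · simp at h; omega

/-- For every `c : ℕ → ℕ` and `n`, the graph `L^c_n` is a finite path: its
vertices can be enumerated as `w 0, …, w m` with adjacency exactly between
consecutive vertices; for `n > 0` its endpoints are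
`e_i^n = (p_0)^⌢(0)^{n-1}⌢(i)`, `i < 2`; and every vertex is of the form
`(p_k)^⌢t` for some `k` and binary string `t` of length at most `n`. -/
theorem stmt8 (c : ℕ → ℕ) (n : ℕ) :
    (∃ (m : ℕ) (w : ℕ → List ℕ),
      (∀ i ≤ m, ∀ j ≤ m, w i = w j → i = j) ∧
      LVerts c n = {v | ∃ j ≤ m, v = w j} ∧
      (∀ u v, LAdj c n u v ↔
        ∃ j, j < m ∧ ((u = w j ∧ v = w (j + 1)) ∨ (u = w (j + 1) ∧ v = w j))) ∧
      (0 < n → ({w 0, w m} : Set (List ℕ)) = {pathEnd n 0, pathEnd n 1})) ∧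
    (∀ v ∈ LVerts c n, ∃ (k : ℕ) (t : List ℕ),
      t.length ≤ n ∧ (∀ a ∈ t, a ≤ 1) ∧ v = k :: t) := by
  obtain ⟨hne, hh, hl, hnd, hv, had, hsh⟩ := W_spec c n
  have hlen : 1 ≤ (Wl c n).length := List.length_pos_iff.mpr hne
  refine ⟨⟨(Wl c n).length - 1, fun j => (Wl c n).getD j [], ?_, ?_, ?_, ?_⟩, ?_⟩
  · intro i hi j hj hij
    have hi' : i < (Wl c n).length := by omega
    have hj' : j < (Wl c n).length := by omega
    simp only at hij
    rw [List.getD_eq_getElem _ _ hi', List.getD_eq_getElem _ _ hj'] at hij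
    exact (hnd.getElem_inj_iff).mp hij
  · rw [hv]; ext x
    simp only [Set.mem_setOf_eq]
    constructor
    · intro hx
      obtain ⟨i, hi, hx⟩ := List.mem_iff_getElem.mp hx
      exact ⟨i, by omega, by rw [List.getD_eq_getElem _ _ hi, hx]⟩
    · rintro ⟨j, hj, rfl⟩
      have hj' : j < (Wl c n).length := by omega
      rw [List.getD_eq_getElem _ _ hj']
      exact List.getElem_mem _
  · intro u v
    rw [had u v, pair_infix_getD, pair_infix_getD]
    constructor
    · rintro (⟨j, h, hu, hv2⟩ | ⟨j, h, hv2, hu⟩)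
      · exact ⟨j, by omega, Or.inl ⟨hu.symm, hv2.symm⟩⟩
      · exact ⟨j, by omega, Or.inr ⟨hu.symm, hv2.symm⟩⟩
    · rintro ⟨j, hj, (⟨rfl, rfl⟩ | ⟨rfl, rfl⟩)⟩
      · exact Or.inl ⟨j, by omega, rfl, rfl⟩
      · exact Or.inr ⟨j, by omega, rfl, rfl⟩
  · intro _
    have h0 : (Wl c n).getD 0 [] = pathEnd n 0 := by
      obtain ⟨ys, hys⟩ := List.head?_eq_some_iff.mp hh
      rw [hys]; rfl
    have hm : (Wl c n).getD ((Wl c n).length - 1) [] = pathEnd n 1 := by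
      rw [List.getLast?_eq_getElem?] at hl
      obtain ⟨h, he⟩ := List.getElem?_eq_some_iff.mp hl
      rw [List.getD_eq_getElem _ _ h, he]
    simp only [h0, hm]
  · intro x hx
    rw [hv] at hx
    exact hsh x hx
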